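/- If ν_LS defines a category on a normal topological space X (i.e. additionally satisfies axiom (iii)), then ν_LS(A) = ν_H(cl(A)) for every subset A ⊆ X; in particular ν_LS and ν_H agree on closed subsets. -/

import Mathlib

open Set

noncomputable def coverNum {X : Type*} [TopologicalSpace X] (T : Set (Set X)) (A : Set X) : ℕ∞ :=
  sInf {n : ℕ∞ | ∃ F : Finset (Set X), (F.card : ℕ∞) = n ∧ ↑F ⊆ T ∧ A ⊆ ⋃₀ ↑F}

def ContractibleIn {X : Type*} [TopologicalSpace X] (A : Set X) : Prop :=
  ∃ c : X, (⟨Subtype.val, continuous_subtype_val⟩ : C(A, X)).Homotopic (ContinuousMap.const A c)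

noncomputable def nuH (M : Type*) [TopologicalSpace M] : Set M → ℕ∞ :=
  coverNum {U : Set M | IsOpen U ∧ ContractibleIn U}

noncomputable def nuLS (M : Type*) [TopologicalSpace M] : Set M → ℕ∞ :=
  coverNum {C : Set M | IsClosed C ∧ ContractibleIn C}

lemma contractibleIn_mono {X : Type*} [TopologicalSpace X] {A B : Set X}
    (h : A ⊆ B) (hB : ContractibleIn B) : ContractibleIn A := by
  obtain ⟨c, H⟩ := hB
  refine ⟨c, ?_⟩
  let j : C(A, B) := ⟨Set.inclusion h, continuous_inclusion h⟩
  have H2 := H.comp (ContinuousMap.Homotopic.refl j)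
  have e1 : (⟨Subtype.val, continuous_subtype_val⟩ : C(B, X)).comp j
      = (⟨Subtype.val, continuous_subtype_val⟩ : C(A, X)) := by
    ext x; rfl
  have e2 : (ContinuousMap.const B c).comp j = ContinuousMap.const A c := by
    ext x; rfl
  rwa [e1, e2] at H2

lemma coverNum_mono {X : Type*} [TopologicalSpace X] (T : Set (Set X)) {A B : Set X}
    (h : A ⊆ B) : coverNum T A ≤ coverNum T B := by
  apply sInf_le_sInf
  rintro n ⟨F, h1, h2, h3⟩
  exact ⟨F, h1, h2, h.trans h3⟩

lemma coverNum_le_card {X : Type*} [TopologicalSpace X] {T : Set (Set X)} {A : Set X}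
    {F : Finset (Set X)} (hF : ↑F ⊆ T) (hc : A ⊆ ⋃₀ ↑F) :
    coverNum T A ≤ (F.card : ℕ∞) :=
  sInf_le ⟨F, rfl, hF, hc⟩

lemma nuLS_closure {X : Type*} [TopologicalSpace X] (A : Set X) :
    nuLS X (closure A) = nuLS X A := by
  refine le_antisymm ?_ (coverNum_mono _ subset_closure)
  apply le_sInf
  rintro n ⟨F, h1, h2, h3⟩
  subst h1
  apply coverNum_le_card h2
  have : IsClosed (⋃₀ (↑F : Set (Set X))) := by
    rw [Set.sUnion_eq_biUnion]
    exact Set.Finite.isClosed_biUnion F.finite_toSet (fun t ht => (h2 ht).1)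
  exact closure_minimal h3 this

/-- For a closed set, `nuLS ≤ nuH` in a normal space (shrinking lemma). -/
lemma nuLS_le_nuH_of_isClosed {X : Type*} [TopologicalSpace X] [NormalSpace X]
    {s : Set X} (hs : IsClosed s) : nuLS X s ≤ nuH X s := by
  apply le_sInf
  rintro n ⟨F, h1, h2, h3⟩
  subst h1
  -- shrink the open cover F of s to a closed cover
  have uo : ∀ i : F, IsOpen (i : Set X) := fun i => (h2 i.2).1
  have uf : ∀ x ∈ s, {i : F | x ∈ (i : Set X)}.Finite := fun x _ => Set.toFinite _
  have us : s ⊆ ⋃ i : F, (i : Set X) := by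
    intro x hx
    obtain ⟨t, ht, hxt⟩ := h3 hx
    exact Set.mem_iUnion.2 ⟨⟨t, ht⟩, hxt⟩
  obtain ⟨v, hsv, hvc, hvu⟩ := exists_subset_iUnion_closed_subset hs uo uf us
  classical
  set G : Finset (Set X) := F.attach.image (fun i => v i) with hG
  have hGT : ↑G ⊆ {C : Set X | IsClosed C ∧ ContractibleIn C} := by
    intro t ht
    simp only [hG, Finset.coe_image, Set.mem_image] at ht
    obtain ⟨i, _, rfl⟩ := ht
    exact ⟨hvc i, contractibleIn_mono (hvu i) (h2 i.2).2⟩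
  have hGc : s ⊆ ⋃₀ ↑G := by
    intro x hx
    obtain ⟨i, hi⟩ := Set.mem_iUnion.1 (hsv hx)
    refine ⟨v i, ?_, hi⟩
    simp only [hG, Finset.coe_image, Set.mem_image]
    exact ⟨i, Finset.mem_attach _ _, rfl⟩
  refine le_trans (coverNum_le_card hGT hGc) ?_
  have : G.card ≤ F.card := le_trans (Finset.card_image_le) (by simp)
  exact_mod_cast this

/-- if `ν_LS` defines a category on a normal space `X` (i.e. also satisfies
axiom (iii)), then `ν_LS(A) = ν_H(cl A)` for every `A`; in particular `ν_LS` and `ν_H`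
agree on closed subsets. -/
theorem nuLS_eq_nuH_closure {X : Type*} [TopologicalSpace X] [NormalSpace X]
    (hiii : ∀ A : Set X, ∃ U : Set X, IsOpen U ∧ A ⊆ U ∧ nuLS X A = nuLS X U) :
    (∀ A : Set X, nuLS X A = nuH X (closure A)) ∧
    (∀ A : Set X, IsClosed A → nuLS X A = nuH X A) := by
  classical
  have main : ∀ A : Set X, nuLS X A = nuH X (closure A) := by
    intro A
    refine le_antisymm ?_ ?_
    · calc nuLS X A ≤ nuLS X (closure A) := coverNum_mono _ subset_closure
        _ ≤ nuH X (closure A) := nuLS_le_nuH_of_isClosed isClosed_closure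
    · -- nuH (closure A) ≤ nuLS A = nuLS (closure A)
      rw [← nuLS_closure A]
      apply le_sInf
      rintro n ⟨F, h1, h2, h3⟩
      subst h1
      -- for each C ∈ F, get an open contractible U ⊇ C
      have key : ∀ C ∈ F, ∃ U : Set X, IsOpen U ∧ C ⊆ U ∧ ContractibleIn U := by
        intro C hC
        obtain ⟨U, hUo, hCU, hUeq⟩ := hiii C
        have h1le : nuLS X C ≤ (1 : ℕ∞) := by
          have := coverNum_le_card (T := {C : Set X | IsClosed C ∧ ContractibleIn C})
            (A := C) (F := {C}) (by simpa using h2 hC) (by simp)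
          simpa [nuLS] using this
        have hU1 : nuLS X U ≤ 1 := hUeq ▸ h1le
        -- extract a witness cover of U with at most one element
        have : ∃ G : Finset (Set X),
            ↑G ⊆ {C : Set X | IsClosed C ∧ ContractibleIn C} ∧ U ⊆ ⋃₀ ↑G ∧
            (G.card : ℕ∞) ≤ 1 := by
          by_contra hcon
          push_neg at hcon
          have h2le : (2 : ℕ∞) ≤ nuLS X U := by
            apply le_sInf
            rintro m ⟨G, hG1, hG2, hG3⟩
            subst hG1
            have hng := hcon G hG2 hG3
            have : 2 ≤ G.card := by
              by_contra hlt
              push_neg at hlt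
              interval_cases h : G.card <;> simp_all
            exact_mod_cast this
          have : (2 : ℕ∞) ≤ 1 := h2le.trans hU1
          norm_num at this
        obtain ⟨G, hGT, hGcov, hGcard⟩ := this
        rcases Finset.eq_empty_or_nonempty G with rfl | ⟨C', hC'⟩
        · -- U ⊆ ∅, so U ⊆ C which is contractible
          simp only [Finset.coe_empty, Set.sUnion_empty, Set.subset_empty_iff] at hGcov
          refine ⟨U, hUo, hCU, ?_⟩
          rw [hGcov]
          exact contractibleIn_mono (Set.empty_subset C) (h2 hC).2
        · have hcard1 : G.card = 1 := by
            have h1 : 1 ≤ G.card := Finset.card_pos.2 ⟨C', hC'⟩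
            have h2' : G.card ≤ 1 := by exact_mod_cast hGcard
            omega
          obtain ⟨x, hx⟩ := Finset.card_eq_one.1 hcard1
          subst hx
          refine ⟨U, hUo, hCU, ?_⟩
          have hUx : U ⊆ x := by simpa using hGcov
          exact contractibleIn_mono hUx (hGT (by simp)).2
      choose! Uf hUo hUsub hUc using key
      set G : Finset (Set X) := F.image Uf with hG
      have hGT : ↑G ⊆ {U : Set X | IsOpen U ∧ ContractibleIn U} := by
        intro t ht
        simp only [hG, Finset.coe_image, Set.mem_image, Finset.mem_coe] at ht
        obtain ⟨C, hC, rfl⟩ := ht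
        exact ⟨hUo C hC, hUc C hC⟩
      have hGcov : closure A ⊆ ⋃₀ ↑G := by
        intro x hx
        obtain ⟨C, hC, hxC⟩ := h3 hx
        refine ⟨Uf C, ?_, hUsub C hC hxC⟩
        simp only [hG, Finset.coe_image, Set.mem_image, Finset.mem_coe]
        exact ⟨C, hC, rfl⟩
      refine le_trans (coverNum_le_card hGT hGcov) ?_
      exact_mod_cast Finset.card_image_le
  exact ⟨main, fun A hA => by rw [main A, hA.closure_eq]⟩
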